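/- The sequence λ_n = n² (n = 1, 2, …) satisfies condition (Σ') but does not satisfy condition (Σ). More precisely: (a) limsup_{n→∞} (n+1)²/n² = 1, hence i(Λ) = 1 for Λ = (n²); and (b) for every subsequence (μ_n) of (n²) the series ∑_{n=1}^{∞} 1/μ_n converges, so no subsequence of (n²) can satisfy both requirements of condition (Σ). -/

import Mathlib

open Filter Topology

/-- Condition (Σ): for every `M > 0` there is a subsequence `(μ_n) = (l (φ n))`
with `|μ_{n+1}| - |μ_n| > M` for all `n` and `∑ 1/|μ_n| = +∞`. -/
def CondSigma (l : ℕ → ℂ) : Prop :=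
  ∀ M : ℝ, 0 < M → ∃ φ : ℕ → ℕ, StrictMono φ ∧
    (∀ n, ‖l (φ (n + 1))‖ - ‖l (φ n)‖ > M) ∧
    Filter.Tendsto (fun N => ∑ n ∈ Finset.range N, (‖l (φ n)‖)⁻¹)
      Filter.atTop Filter.atTop

/-- The limsup of the ratios `|l (φ (n+1))| / |l (φ n)|` along a subsequence `φ`,
valued in `ℝ≥0∞`. -/
noncomputable def ratioLimsup (l : ℕ → ℂ) (φ : ℕ → ℕ) : ENNReal :=
  Filter.limsup
    (fun n => ENNReal.ofReal (‖l (φ (n + 1))‖ / ‖l (φ n)‖))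
    Filter.atTop

/-- `iSeq Λ := inf { limsup |μ_{n+1}/μ_n| : (μ_n) a subsequence of Λ }`. -/
noncomputable def iSeq (l : ℕ → ℂ) : ENNReal :=
  ⨅ φ ∈ {φ : ℕ → ℕ | StrictMono φ}, ratioLimsup l φ

lemma abs_sq_nat (k : ℕ) : ‖(k : ℂ) ^ 2‖ = (k : ℝ) ^ 2 := by
  simp [map_pow]

lemma ratio_tendsto : Tendsto (fun n : ℕ => ((n : ℝ) + 2) ^ 2 / ((n : ℝ) + 1) ^ 2)
    atTop (𝓝 1) := by
  have h : Tendsto (fun n : ℕ => ((n : ℝ) + 2) / ((n : ℝ) + 1)) atTop (𝓝 1) := by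
    have h2 : Tendsto (fun n : ℕ => 1 + 1 / ((n : ℝ) + 1)) atTop (𝓝 (1 + 0)) :=
      tendsto_const_nhds.add tendsto_one_div_add_atTop_nhds_zero_nat
    simp only [add_zero] at h2
    refine h2.congr fun n => ?_
    field_simp
    ring
  have := h.mul h
  simp only [one_mul] at this
  refine this.congr fun n => ?_
  rw [div_mul_div_comm, sq, sq]

lemma summable_sq_inv : Summable (fun n : ℕ => (((n : ℝ)) ^ 2)⁻¹) := by
  simpa using Real.summable_one_div_nat_pow.mpr one_lt_two

lemma summ (φ : ℕ → ℕ) (hφ : StrictMono φ) :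
    Summable fun n => (‖(((φ n + 1 : ℕ)) : ℂ) ^ 2‖)⁻¹ := by
  have hinj : Function.Injective (fun n => φ n + 1) := by
    intro a b h
    simp only at h
    exact hφ.injective (by omega)
  have := summable_sq_inv.comp_injective hinj
  refine this.congr fun n => ?_
  simp only [Function.comp_apply, abs_sq_nat]

theorem squares_satisfy_sigma'_not_sigma :
    (Filter.limsup
        (fun n : ℕ =>
          ((‖(((n : ℕ) + 2 : ℕ) : ℂ) ^ 2‖ /
              ‖(((n : ℕ) + 1 : ℕ) : ℂ) ^ 2‖ : ℝ) : EReal))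
        Filter.atTop = (1 : EReal)) ∧
    iSeq (fun n : ℕ => (((n + 1 : ℕ) : ℂ) ^ 2)) = 1 ∧
    (∀ φ : ℕ → ℕ, StrictMono φ →
      Summable fun n => (‖(((φ n + 1 : ℕ)) : ℂ) ^ 2‖)⁻¹) ∧
    (∀ M : ℝ, 0 < M → ¬ ∃ φ : ℕ → ℕ, StrictMono φ ∧
      (∀ n, ‖(((φ (n + 1) + 1 : ℕ)) : ℂ) ^ 2‖ -
          ‖(((φ n + 1 : ℕ)) : ℂ) ^ 2‖ > M) ∧
      Filter.Tendsto
        (fun N => ∑ n ∈ Finset.range N, (‖(((φ n + 1 : ℕ)) : ℂ) ^ 2‖)⁻¹)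
        Filter.atTop Filter.atTop) ∧
    ¬ CondSigma (fun n : ℕ => (((n + 1 : ℕ) : ℂ) ^ 2)) := by
  have habs : ∀ k : ℕ, ‖(k : ℂ) ^ 2‖ = (k : ℝ) ^ 2 := abs_sq_nat
  have hnotsum : ∀ M : ℝ, 0 < M → ¬ ∃ φ : ℕ → ℕ, StrictMono φ ∧
      (∀ n, ‖(((φ (n + 1) + 1 : ℕ)) : ℂ) ^ 2‖ -
          ‖(((φ n + 1 : ℕ)) : ℂ) ^ 2‖ > M) ∧
      Filter.Tendsto
        (fun N => ∑ n ∈ Finset.range N, (‖(((φ n + 1 : ℕ)) : ℂ) ^ 2‖)⁻¹)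
        Filter.atTop Filter.atTop := by
    rintro M hM ⟨φ, hφ, -, htend⟩
    have hs := summ φ hφ
    exact not_tendsto_atTop_of_tendsto_nhds hs.hasSum.tendsto_sum_nat htend
  refine ⟨?_, ?_, summ, hnotsum, ?_⟩
  · have : Tendsto (fun n : ℕ =>
        ((‖(((n : ℕ) + 2 : ℕ) : ℂ) ^ 2‖ /
            ‖(((n : ℕ) + 1 : ℕ) : ℂ) ^ 2‖ : ℝ) : EReal)) atTop (𝓝 (1 : EReal)) := by
      have h := ratio_tendsto
      have hc : Tendsto (fun x : ℝ => (x : EReal)) (𝓝 1) (𝓝 (1 : EReal)) :=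
        continuous_coe_real_ereal.continuousAt
      refine (hc.comp h).congr fun n => ?_
      rw [Function.comp_apply, habs, habs]
      push_cast
      ring_nf
    exact this.limsup_eq
  · apply le_antisymm
    · have hle : iSeq (fun n : ℕ => (((n + 1 : ℕ) : ℂ) ^ 2)) ≤
          ratioLimsup (fun n : ℕ => (((n + 1 : ℕ) : ℂ) ^ 2)) id :=
        biInf_le _ strictMono_id
      refine hle.trans_eq ?_
      have : Tendsto (fun n : ℕ => ENNReal.ofReal
          (‖(((id n + 1 + 1 : ℕ)) : ℂ) ^ 2‖ /
            ‖(((id n + 1 : ℕ)) : ℂ) ^ 2‖)) atTop (𝓝 1) := by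
        have h := ratio_tendsto
        have hc : Tendsto ENNReal.ofReal (𝓝 1) (𝓝 (ENNReal.ofReal 1)) :=
          ENNReal.continuous_ofReal.continuousAt
        rw [ENNReal.ofReal_one] at hc
        refine (hc.comp h).congr fun n => ?_
        rw [Function.comp_apply, habs, habs]
        simp only [id]
        push_cast
        ring_nf
      exact this.limsup_eq
    · refine le_iInf fun φ => le_iInf fun (hφ : StrictMono φ) => ?_
      have hge : ∀ n : ℕ, (1 : ENNReal) ≤ ENNReal.ofReal
          (‖(((φ (n+1) + 1 : ℕ)) : ℂ) ^ 2‖ /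
            ‖(((φ n + 1 : ℕ)) : ℂ) ^ 2‖) := by
        intro n
        rw [show (1:ENNReal) = ENNReal.ofReal 1 by simp]
        apply ENNReal.ofReal_le_ofReal
        rw [habs, habs, le_div_iff₀ (by positivity), one_mul]
        have h1 : φ n + 1 ≤ φ (n+1) + 1 := by
          have := hφ (show n < n + 1 by omega); omega
        gcongr
        
      calc (1 : ENNReal) ≤ liminf (fun n => ENNReal.ofReal
            (‖(((φ (n+1) + 1 : ℕ)) : ℂ) ^ 2‖ /
              ‖(((φ n + 1 : ℕ)) : ℂ) ^ 2‖)) atTop :=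
          le_liminf_of_le (by isBoundedDefault) (Eventually.of_forall hge)
        _ ≤ _ := liminf_le_limsup
  · intro h
    obtain ⟨φ, hφ, hgap, htend⟩ := h 1 one_pos
    exact hnotsum 1 one_pos ⟨φ, hφ, hgap, htend⟩
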